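/- arXiv:1011.3359 — 2 statements merged into one kernel-verified Lean document; each statement's English description precedes it below -/
import Mathlib

section
/- Let ν > -1 and let μ, μ' be two distinct positive zeros of the Bessel function J_ν (i.e. μ, μ' > 0, μ ≠ μ', J_ν(μ) = J_ν(μ') = 0). Then ∫₀¹ J_ν(μx) · J_ν(μ'x) · x dx = 0. -/
open scoped Real

/-- The Bessel function of the first kind of order `ν`, defined by its power series
`J_ν(x) = Σ_{r=0}^∞ ((-1)^r / (r! · Γ(ν + r + 1))) · (x/2)^(ν + 2r)`. -/
noncomputable def besselJ (ν x : ℝ) : ℝ :=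
  ∑' r : ℕ, ((-1 : ℝ) ^ r / (r.factorial * Real.Gamma (ν + r + 1))) *
    (x / 2) ^ (ν + 2 * (r : ℝ))

open Filter

namespace BesselOrth

noncomputable def c (ν : ℝ) (r : ℕ) : ℝ :=
  (-1 : ℝ) ^ r / (r.factorial * Real.Gamma (ν + r + 1))

lemma arg_pos {ν : ℝ} (hν : -1 < ν) (r : ℕ) : 0 < ν + (r : ℝ) + 1 := by
  have : (0:ℝ) ≤ r := Nat.cast_nonneg r
  linarith

lemma gamma_pos {ν : ℝ} (hν : -1 < ν) (r : ℕ) : 0 < Real.Gamma (ν + r + 1) :=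
  Real.Gamma_pos_of_pos (arg_pos hν r)

lemma c_rec {ν : ℝ} (hν : -1 < ν) (r : ℕ) :
    ((r:ℝ)+1) * (ν + (r:ℝ) + 1) * c ν (r+1) = - c ν r := by
  have hg := gamma_pos hν r
  have hne : ν + (r:ℝ) + 1 ≠ 0 := (arg_pos hν r).ne'
  unfold c
  push_cast
  rw [show ν + ((r:ℝ) + 1) + 1 = (ν + (r:ℝ) + 1) + 1 by ring,
    Real.Gamma_add_one hne, Nat.factorial_succ]
  have hfac : ((r.factorial : ℝ)) ≠ 0 := by exact_mod_cast r.factorial_ne_zero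
  push_cast
  field_simp
  ring

lemma abs_c_succ {ν : ℝ} (hν : -1 < ν) (r : ℕ) :
    |c ν (r+1)| = |c ν r| / (((r:ℝ)+1) * (ν + (r:ℝ) + 1)) := by
  have hpos : 0 < ((r:ℝ)+1) * (ν + (r:ℝ) + 1) := by
    have h1 : (0:ℝ) < (r:ℝ) + 1 := by positivity
    exact mul_pos h1 (arg_pos hν r)
  have h2 : |((r:ℝ)+1) * (ν + (r:ℝ) + 1) * c ν (r+1)| = |c ν r| := by
    rw [c_rec hν r, abs_neg]
  rw [abs_mul, abs_of_pos hpos] at h2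
  rw [eq_div_iff hpos.ne', mul_comm]
  exact h2

lemma summable_master {ν : ℝ} (hν : -1 < ν) {R : ℝ} (hR : 0 ≤ R) :
    Summable (fun r : ℕ => |c ν r| * ((r:ℝ)+1)^2 * R^r) := by
  apply summable_of_ratio_norm_eventually_le (r := 1/2) (by norm_num)
  filter_upwards [Filter.eventually_ge_atTop (⌈4*R⌉₊ + 2)] with n hn
  have hn2 : (2:ℝ) ≤ (n:ℝ) := by exact_mod_cast le_trans (by omega) hn
  have hn4 : 4*R ≤ (n:ℝ) := by
    have h : (⌈4*R⌉₊ : ℝ) ≤ (n:ℝ) := by exact_mod_cast le_trans (by omega) hn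
    exact le_trans (Nat.le_ceil _) h
  have hνn : 0 < ν + (n:ℝ) + 1 := arg_pos hν n
  have hD : 0 < ((n:ℝ)+1) * (ν + (n:ℝ) + 1) := by
    have h1 : (0:ℝ) < (n:ℝ) + 1 := by positivity
    exact mul_pos h1 hνn
  have hterm : ∀ m:ℕ, |(|c ν m| * ((m:ℝ)+1)^2 * R^m)| = |c ν m| * ((m:ℝ)+1)^2 * R^m :=
    fun m => abs_of_nonneg (mul_nonneg (mul_nonneg (abs_nonneg _) (by positivity)) (pow_nonneg hR _))
  rw [Real.norm_eq_abs, Real.norm_eq_abs, hterm, hterm, abs_c_succ hν n]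
  push_cast
  rw [div_mul_eq_mul_div, div_mul_eq_mul_div, div_le_iff₀ hD]
  have key : ((n:ℝ)+1+1)^2 * R * 2 ≤ (((n:ℝ)+1)^2) * (((n:ℝ)+1) * (ν + (n:ℝ) + 1)) := by
    nlinarith [sq_nonneg ((n:ℝ)-1), sq_nonneg ((n:ℝ)+1), hn2, hn4, hR, hνn]
  calc |c ν n| * ((n:ℝ)+1+1)^2 * R^(n+1)
      = (|c ν n| * R^n) * (((n:ℝ)+1+1)^2 * R) := by rw [pow_succ]; ring
    _ ≤ (|c ν n| * R^n) * ((((n:ℝ)+1)^2 * (((n:ℝ)+1) * (ν+(n:ℝ)+1))) / 2) := by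
        apply mul_le_mul_of_nonneg_left _ (by positivity)
        linarith
    _ = 1/2 * (|c ν n| * ((n:ℝ)+1)^2 * R^n) * (((n:ℝ)+1) * (ν + (n:ℝ) + 1)) := by ring


noncomputable def e0 (ν : ℝ) (r : ℕ) (t : ℝ) : ℝ := c ν r * t ^ r
noncomputable def e1 (ν : ℝ) (r : ℕ) (t : ℝ) : ℝ := c ν r * ((r:ℝ) * t ^ (r-1))
noncomputable def e2 (ν : ℝ) (r : ℕ) (t : ℝ) : ℝ :=
  c ν r * ((r:ℝ) * (((r-1 : ℕ):ℝ) * t ^ (r-1-1)))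

lemma abs_pow_le {t R : ℝ} (h : |t| ≤ R) (hR : 1 ≤ R) {k r : ℕ} (hkr : k ≤ r) :
    |t|^k ≤ R^r :=
  le_trans (pow_le_pow_left₀ (abs_nonneg t) h k) (pow_le_pow_right₀ hR hkr)

lemma one_le_sq (r : ℕ) : (1:ℝ) ≤ ((r:ℝ)+1)^2 := by
  have : (0:ℝ) ≤ r := Nat.cast_nonneg r
  nlinarith

lemma abs_e0_le (ν : ℝ) {t R : ℝ} (h : |t| ≤ R) (hR : 1 ≤ R) (r : ℕ) :
    |e0 ν r t| ≤ |c ν r| * ((r:ℝ)+1)^2 * R^r := by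
  have h1 : |t|^r ≤ ((r:ℝ)+1)^2 * R^r := by
    refine le_trans (abs_pow_le h hR le_rfl) ?_
    exact le_mul_of_one_le_left (by positivity) (one_le_sq r)
  calc |e0 ν r t| = |c ν r| * |t|^r := by rw [e0, abs_mul, abs_pow]
    _ ≤ |c ν r| * (((r:ℝ)+1)^2 * R^r) := mul_le_mul_of_nonneg_left h1 (abs_nonneg _)
    _ = |c ν r| * ((r:ℝ)+1)^2 * R^r := by ring

lemma abs_e1_le (ν : ℝ) {t R : ℝ} (h : |t| ≤ R) (hR : 1 ≤ R) (r : ℕ) :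
    |e1 ν r t| ≤ |c ν r| * ((r:ℝ)+1)^2 * R^r := by
  have hr : (0:ℝ) ≤ r := Nat.cast_nonneg r
  have h1 : (r:ℝ) * |t|^(r-1) ≤ ((r:ℝ)+1)^2 * R^r := by
    apply mul_le_mul (by nlinarith) (abs_pow_le h hR (Nat.sub_le r 1)) (by positivity) (by positivity)
  calc |e1 ν r t| = |c ν r| * ((r:ℝ) * |t|^(r-1)) := by
        rw [e1, abs_mul, abs_mul, abs_pow, Nat.abs_cast]
    _ ≤ |c ν r| * (((r:ℝ)+1)^2 * R^r) := mul_le_mul_of_nonneg_left h1 (abs_nonneg _)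
    _ = |c ν r| * ((r:ℝ)+1)^2 * R^r := by ring

lemma abs_e2_le (ν : ℝ) {t R : ℝ} (h : |t| ≤ R) (hR : 1 ≤ R) (r : ℕ) :
    |e2 ν r t| ≤ |c ν r| * ((r:ℝ)+1)^2 * R^r := by
  have hr : (0:ℝ) ≤ r := Nat.cast_nonneg r
  have hr1 : ((r-1 : ℕ):ℝ) ≤ (r:ℝ) := by exact_mod_cast Nat.sub_le r 1
  have hr1' : (0:ℝ) ≤ ((r-1:ℕ):ℝ) := Nat.cast_nonneg _
  have h1 : (r:ℝ) * (((r-1:ℕ):ℝ) * |t|^(r-1-1)) ≤ ((r:ℝ)+1)^2 * R^r := by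
    have h2 : ((r-1:ℕ):ℝ) * |t|^(r-1-1) ≤ ((r:ℝ)+1) * R^r := by
      apply mul_le_mul (by linarith) (abs_pow_le h hR (le_trans (Nat.sub_le _ 1) (Nat.sub_le r 1)))
        (by positivity) (by linarith)
    calc (r:ℝ) * (((r-1:ℕ):ℝ) * |t|^(r-1-1)) ≤ (r:ℝ) * (((r:ℝ)+1) * R^r) :=
          mul_le_mul_of_nonneg_left h2 hr
      _ ≤ ((r:ℝ)+1)^2 * R^r := by nlinarith [pow_nonneg (le_trans zero_le_one hR) r]
  calc |e2 ν r t| = |c ν r| * ((r:ℝ) * (((r-1:ℕ):ℝ) * |t|^(r-1-1))) := by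
        rw [e2, abs_mul, abs_mul, abs_mul, abs_pow, Nat.abs_cast, Nat.abs_cast]
    _ ≤ |c ν r| * (((r:ℝ)+1)^2 * R^r) := mul_le_mul_of_nonneg_left h1 (abs_nonneg _)
    _ = |c ν r| * ((r:ℝ)+1)^2 * R^r := by ring

lemma summable_bound {ν : ℝ} (hν : -1 < ν) {f : ℕ → ℝ} {R : ℝ} (hR : 0 ≤ R)
    (h : ∀ r, |f r| ≤ |c ν r| * ((r:ℝ)+1)^2 * R^r) : Summable f :=
  Summable.of_norm_bounded (summable_master hν hR) h

lemma R_lem (t : ℝ) : |t| ≤ |t| + 1 ∧ 1 ≤ |t| + 1 ∧ (0:ℝ) ≤ |t| + 1 := by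
  have := abs_nonneg t; exact ⟨by linarith, by linarith, by linarith⟩

lemma summable_e0 {ν : ℝ} (hν : -1 < ν) (t : ℝ) : Summable (fun r => e0 ν r t) :=
  summable_bound hν (R_lem t).2.2 (fun r => abs_e0_le ν (R_lem t).1 (R_lem t).2.1 r)

lemma summable_e1 {ν : ℝ} (hν : -1 < ν) (t : ℝ) : Summable (fun r => e1 ν r t) :=
  summable_bound hν (R_lem t).2.2 (fun r => abs_e1_le ν (R_lem t).1 (R_lem t).2.1 r)

lemma summable_e2 {ν : ℝ} (hν : -1 < ν) (t : ℝ) : Summable (fun r => e2 ν r t) :=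
  summable_bound hν (R_lem t).2.2 (fun r => abs_e2_le ν (R_lem t).1 (R_lem t).2.1 r)

noncomputable def g (ν t : ℝ) : ℝ := ∑' r, e0 ν r t
noncomputable def g1 (ν t : ℝ) : ℝ := ∑' r, e1 ν r t
noncomputable def g2 (ν t : ℝ) : ℝ := ∑' r, e2 ν r t

lemma hasDerivAt_e0 (ν : ℝ) (r : ℕ) (t : ℝ) :
    HasDerivAt (fun y => e0 ν r y) (e1 ν r t) t := by
  simpa [e0, e1] using (hasDerivAt_pow r t).const_mul (c ν r)

lemma hasDerivAt_e1 (ν : ℝ) (r : ℕ) (t : ℝ) :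
    HasDerivAt (fun y => e1 ν r y) (e2 ν r t) t := by
  simpa [e1, e2, mul_assoc] using (hasDerivAt_pow (r-1) t).const_mul (c ν r * (r:ℝ))

lemma hasDerivAt_g {ν : ℝ} (hν : -1 < ν) (t : ℝ) : HasDerivAt (g ν) (g1 ν t) t := by
  set R := |t| + 1 with hRdef
  obtain ⟨hle, h1R, h0R⟩ := R_lem t
  have ht : t ∈ Metric.ball (0:ℝ) R := by
    simpa [Real.norm_eq_abs] using (by linarith [abs_nonneg t] : |t| < R)
  exact hasDerivAt_tsum_of_isPreconnected (summable_master hν h0R) Metric.isOpen_ball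
    (convex_ball (0:ℝ) R).isPreconnected
    (fun r y _ => hasDerivAt_e0 ν r y)
    (fun r y hy => by
      have : |y| ≤ R := le_of_lt (by simpa [Real.norm_eq_abs] using hy)
      simpa [Real.norm_eq_abs] using abs_e1_le ν this h1R r)
    ht (summable_e0 hν t) ht

lemma hasDerivAt_g1 {ν : ℝ} (hν : -1 < ν) (t : ℝ) : HasDerivAt (g1 ν) (g2 ν t) t := by
  set R := |t| + 1 with hRdef
  obtain ⟨hle, h1R, h0R⟩ := R_lem t
  have ht : t ∈ Metric.ball (0:ℝ) R := by
    simpa [Real.norm_eq_abs] using (by linarith [abs_nonneg t] : |t| < R)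
  exact hasDerivAt_tsum_of_isPreconnected (summable_master hν h0R) Metric.isOpen_ball
    (convex_ball (0:ℝ) R).isPreconnected
    (fun r y _ => hasDerivAt_e1 ν r y)
    (fun r y hy => by
      have : |y| ≤ R := le_of_lt (by simpa [Real.norm_eq_abs] using hy)
      simpa [Real.norm_eq_abs] using abs_e2_le ν this h1R r)
    ht (summable_e1 hν t) ht

lemma continuous_g {ν : ℝ} (hν : -1 < ν) : Continuous (g ν) :=
  continuous_iff_continuousAt.mpr fun t => (hasDerivAt_g hν t).continuousAt

lemma continuous_g1 {ν : ℝ} (hν : -1 < ν) : Continuous (g1 ν) :=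
  continuous_iff_continuousAt.mpr fun t => (hasDerivAt_g1 hν t).continuousAt


lemma term_ode (ν t : ℝ) (r : ℕ) :
    t * e2 ν r t + (ν+1) * e1 ν r t = ((r:ℝ) * ((r:ℝ)+ν)) * (c ν r * t^(r-1)) := by
  match r with
  | 0 => simp [e1, e2]
  | 1 =>
    simp only [e1, e2]
    push_cast
    ring
  | (n+2) =>
    simp only [e1, e2]
    rw [show n+2-1 = n+1 from rfl, show n+1-1 = n from rfl]
    push_cast
    rw [show t^(n+1) = t^n * t from pow_succ t n]
    ring

lemma ode {ν : ℝ} (hν : -1 < ν) (t : ℝ) :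
    t * g2 ν t + (ν+1) * g1 ν t + g ν t = 0 := by
  have s0 := summable_e0 hν t
  have s1 := summable_e1 hν t
  have s2 := summable_e2 hν t
  have s2' : Summable (fun r => t * e2 ν r t) := s2.mul_left t
  have s1' : Summable (fun r => (ν+1) * e1 ν r t) := s1.mul_left (ν+1)
  have hfun : (fun r : ℕ => t * e2 ν r t + (ν+1) * e1 ν r t)
      = fun r : ℕ => ((r:ℝ) * ((r:ℝ)+ν)) * (c ν r * t^(r-1)) := by
    funext r; exact term_ode ν t r
  have hd : Summable (fun r : ℕ => ((r:ℝ) * ((r:ℝ)+ν)) * (c ν r * t^(r-1))) := by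
    rw [← hfun]; exact s2'.add s1'
  have key : t * g2 ν t + (ν+1) * g1 ν t
      = ∑' r : ℕ, ((r:ℝ) * ((r:ℝ)+ν)) * (c ν r * t^(r-1)) := by
    rw [g2, g1, ← tsum_mul_left, ← tsum_mul_left, ← Summable.tsum_add s2' s1', hfun]
  have hshift : ∀ r : ℕ, ((((r+1):ℕ):ℝ) * ((((r+1):ℕ):ℝ)+ν)) * (c ν (r+1) * t^((r+1)-1))
      = -(e0 ν r t) := by
    intro r
    have hrec := c_rec hν r
    rw [Nat.add_sub_cancel, e0]
    push_cast
    linear_combination t^r * hrec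
  rw [key, Summable.tsum_eq_zero_add hd]
  simp only [hshift]
  rw [tsum_neg]
  simp [g]


lemma besselJ_eq (ν : ℝ) {x : ℝ} (hx : 0 < x) :
    besselJ ν x = (x/2)^ν * g ν (x^2/4) := by
  unfold besselJ g e0 c
  rw [← tsum_mul_left]
  apply tsum_congr
  intro r
  have hx2 : (0:ℝ) < x/2 := by linarith
  have hsplit : (x/2) ^ (ν + 2*(r:ℝ)) = (x/2)^ν * ((x/2) ^ (2*(r:ℝ))) :=
    Real.rpow_add hx2 _ _
  have h2 : (x/2) ^ (2*(r:ℝ)) = (x^2/4)^r := by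
    rw [show (2*(r:ℝ)) = (((2*r : ℕ)):ℝ) by push_cast; ring, Real.rpow_natCast, pow_mul,
      show (x/2)^2 = x^2/4 by ring]
  rw [hsplit, h2]
  ring

noncomputable def Hf (ν A B t : ℝ) : ℝ :=
  B * g ν (A*t) * g1 ν (B*t) - A * g1 ν (A*t) * g ν (B*t)

lemma hasDerivAt_comp_mul {ν : ℝ} (hν : -1 < ν) (A s : ℝ) :
    HasDerivAt (fun t => g ν (A*t)) (g1 ν (A*s) * A) s := by
  have h := (hasDerivAt_g hν (A*s)).comp s ((hasDerivAt_id s).const_mul A)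
  simp at h
  exact h

lemma hasDerivAt_comp_mul1 {ν : ℝ} (hν : -1 < ν) (A s : ℝ) :
    HasDerivAt (fun t => g1 ν (A*t)) (g2 ν (A*s) * A) s := by
  have h := (hasDerivAt_g1 hν (A*s)).comp s ((hasDerivAt_id s).const_mul A)
  simp at h
  exact h

lemma hasDerivAt_Hf {ν : ℝ} (hν : -1 < ν) (A B t : ℝ) :
    HasDerivAt (Hf ν A B)
      (B^2 * g ν (A*t) * g2 ν (B*t) - A^2 * g2 ν (A*t) * g ν (B*t)) t := by
  have h1 := ((hasDerivAt_comp_mul hν A t).const_mul B).mul (hasDerivAt_comp_mul1 hν B t)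
  have h2 := ((hasDerivAt_comp_mul1 hν A t).const_mul A).mul (hasDerivAt_comp_mul hν B t)
  have h := h1.sub h2
  refine h.congr_deriv (Eq.symm ?_)
  ring

lemma key_Hf {ν : ℝ} (hν : -1 < ν) (A B t : ℝ) :
    t * (B^2 * g ν (A*t) * g2 ν (B*t) - A^2 * g2 ν (A*t) * g ν (B*t))
      = -(ν+1) * Hf ν A B t + (A - B) * (g ν (A*t) * g ν (B*t)) := by
  have o1 := ode hν (A*t)
  have o2 := ode hν (B*t)
  rw [Hf]
  linear_combination (B * g ν (A*t)) * o2 - (A * g ν (B*t)) * o1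

end BesselOrth

open BesselOrth Set MeasureTheory intervalIntegral in
theorem bessel_orthogonality (ν : ℝ) (hν : -1 < ν) (μ μ' : ℝ)
    (hμ : 0 < μ) (hμ' : 0 < μ') (hne : μ ≠ μ')
    (hzero : besselJ ν μ = 0) (hzero' : besselJ ν μ' = 0) :
    ∫ x in (0:ℝ)..1, besselJ ν (μ * x) * besselJ ν (μ' * x) * x = 0 := by
  have hμ2 : (0:ℝ) < μ/2 := by linarith
  have hμ'2 : (0:ℝ) < μ'/2 := by linarith
  set A := μ^2/4 with hA
  set B := μ'^2/4 with hB
  set C := (μ/2)^ν with hC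
  set C' := (μ'/2)^ν with hC'
  have hCpos : 0 < C := Real.rpow_pos_of_pos hμ2 ν
  have hC'pos : 0 < C' := Real.rpow_pos_of_pos hμ'2 ν
  have hdiff : μ^2 - μ'^2 ≠ 0 := by
    intro h
    apply hne
    nlinarith
  have hgA : g ν A = 0 := by
    have h := (besselJ_eq ν hμ).symm.trans hzero
    rcases mul_eq_zero.mp h with h | h
    · exact absurd h hCpos.ne'
    · exact h
  have hgB : g ν B = 0 := by
    have h := (besselJ_eq ν hμ').symm.trans hzero'
    rcases mul_eq_zero.mp h with h | h
    · exact absurd h hC'pos.ne'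
    · exact h
  set K := 2*C*C'/(μ^2-μ'^2) with hK
  set F : ℝ → ℝ := fun x => K * (x ^ (2*ν+2) * Hf ν A B (x^2)) with hF
  set ψ : ℝ → ℝ := fun x => x ^ (2*ν+1) * (C*C' * (g ν (A*x^2) * g ν (B*x^2))) with hψ
  have hHcont : Continuous (fun x : ℝ => Hf ν A B (x^2)) := by
    have h : Continuous (Hf ν A B) :=
      continuous_iff_continuousAt.mpr fun t => (hasDerivAt_Hf hν A B t).continuousAt
    exact h.comp (continuous_pow 2)
  have hrpow_cont : Continuous (fun x : ℝ => x ^ (2*ν+2)) :=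
    continuous_iff_continuousAt.mpr fun x =>
      Real.continuousAt_rpow_const x _ (Or.inr (by linarith))
  have hFcont : ContinuousOn F (Icc 0 1) :=
    (continuous_const.mul (hrpow_cont.mul hHcont)).continuousOn
  have hKfact : K * (2*(A-B)) = C*C' := by
    rw [hK, hA, hB]
    field_simp
    ring
  have hFderiv : ∀ x ∈ Ioo (0:ℝ) 1, HasDerivAt F (ψ x) x := by
    intro x hx
    have hx0 : 0 < x := hx.1
    have h1 : HasDerivAt (fun y : ℝ => y ^ (2*ν+2)) ((2*ν+2) * x ^ (2*ν+1)) x := by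
      have h := Real.hasDerivAt_rpow_const (x := x) (p := 2*ν+2) (Or.inl hx0.ne')
      convert h using 2
      ring
    have h2 : HasDerivAt (fun y : ℝ => Hf ν A B (y^2))
        ((B^2*g ν (A*x^2)*g2 ν (B*x^2) - A^2*g2 ν (A*x^2)*g ν (B*x^2)) * (2*x)) x := by
      have h := (hasDerivAt_Hf hν A B (x^2)).comp x (hasDerivAt_pow 2 x)
      simp at h
      exact h
    have h3 := (h1.mul h2).const_mul K
    refine h3.congr_deriv (Eq.symm ?_)
    have hxpow : x ^ (2*ν+2) = x ^ (2*ν+1) * x := by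
      rw [show 2*ν+2 = (2*ν+1)+1 by ring, Real.rpow_add hx0, Real.rpow_one]
    have hkey := key_Hf hν A B (x^2)
    rw [hψ, hxpow]
    linear_combination (-(2*K*(x ^ (2*ν+1)))) * hkey
      - ((x ^ (2*ν+1)) * (g ν (A*x^2) * g ν (B*x^2))) * hKfact
  have hgcont : Continuous (g ν) :=
    continuous_iff_continuousAt.mpr fun t => (hasDerivAt_g hν t).continuousAt
  have hψint : IntervalIntegrable ψ volume 0 1 := by
    apply (intervalIntegrable_rpow' (by linarith : (-1:ℝ) < 2*ν+1)).mul_continuousOn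
    apply Continuous.continuousOn
    exact continuous_const.mul
      ((hgcont.comp (continuous_const.mul (continuous_pow 2))).mul
        (hgcont.comp (continuous_const.mul (continuous_pow 2))))
  have hint : ∫ x in (0:ℝ)..1, ψ x = F 1 - F 0 :=
    integral_eq_sub_of_hasDeriv_right_of_le zero_le_one hFcont
      (fun x hx => (hFderiv x hx).hasDerivWithinAt) hψint
  have hF0 : F 0 = 0 := by
    rw [hF]
    simp [Real.zero_rpow (by linarith : 2*ν+2 ≠ 0)]
  have hF1 : F 1 = 0 := by
    rw [hF]
    simp [Hf, one_pow, mul_one, hgA, hgB]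
  have hcongr : ∫ x in (0:ℝ)..1, besselJ ν (μ*x) * besselJ ν (μ'*x) * x
      = ∫ x in (0:ℝ)..1, ψ x := by
    apply intervalIntegral.integral_congr_ae
    apply Filter.Eventually.of_forall
    intro x hx
    rw [Set.uIoc_of_le (by norm_num : (0:ℝ) ≤ 1)] at hx
    have hx0 : 0 < x := hx.1
    have h1 : besselJ ν (μ*x) = C * x^ν * g ν (A*x^2) := by
      rw [besselJ_eq ν (by positivity), show μ*x/2 = (μ/2)*x by ring,
        Real.mul_rpow hμ2.le hx0.le, show (μ*x)^2/4 = A*x^2 by rw [hA]; ring, hC]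
    have h2 : besselJ ν (μ'*x) = C' * x^ν * g ν (B*x^2) := by
      rw [besselJ_eq ν (by positivity), show μ'*x/2 = (μ'/2)*x by ring,
        Real.mul_rpow hμ'2.le hx0.le, show (μ'*x)^2/4 = B*x^2 by rw [hB]; ring, hC']
    have hxx : x^ν * x^ν * x = x^(2*ν+1) := by
      rw [show (2*ν+1) = ν+ν+1 by ring, Real.rpow_add hx0, Real.rpow_add hx0, Real.rpow_one]
    have hpsix : ψ x = x ^ (2*ν+1) * (C*C' * (g ν (A*x^2) * g ν (B*x^2))) := rfl
    rw [h1, h2, hpsix, ← hxx]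
    ring
  rw [hcongr, hint, hF0, hF1, sub_zero]
end

section
/- Let ν > -1 and let μ be a positive zero of the Bessel function J_ν (i.e. μ > 0 and J_ν(μ) = 0). Then ∫₀¹ (J_ν(μx))² · x dx = (1/2) · (J_{ν+1}(μ))². -/
open scoped Real

namespace BesselNorm

open Finset

/-! ### Descending factorials and Chu–Vandermonde -/

noncomputable def D (x : ℝ) : ℕ → ℝ
  | 0 => 1
  | (k+1) => D x k * (x - k)

@[simp] lemma D_zero (x : ℝ) : D x 0 = 1 := rfl
lemma D_succ (x : ℝ) (k : ℕ) : D x (k+1) = D x k * (x - k) := rfl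

lemma D_succ_left (x : ℝ) (k : ℕ) : D (x+1) (k+1) = (x+1) * D x k := by
  induction k with
  | zero => simp [D_succ, D]
  | succ k ih => rw [D_succ, ih, D_succ]; push_cast; ring

/-- Chu–Vandermonde for descending factorials. -/
lemma vandermonde (m : ℕ) (x y : ℝ) :
    ∑ r ∈ range (m+1), (m.choose r : ℝ) * D x r * D y (m - r) = D (x+y) m := by
  induction m with
  | zero => simp
  | succ m ih =>
      have hS : ∑ r ∈ range (m+2), ((m+1).choose r : ℝ) * D x r * D y (m+1-r)
          = (∑ s ∈ range (m+1), (m.choose s : ℝ) * D x (s+1) * D y (m-s))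
            + ((∑ s ∈ range (m+1), (m.choose (s+1) : ℝ) * D x (s+1) * D y (m-s))
              + D y (m+1)) := by
        rw [Finset.sum_range_succ']
        have : ∀ s ∈ range (m+1),
            (((m+1).choose (s+1) : ℝ)) * D x (s+1) * D y (m+1-(s+1))
            = (m.choose s : ℝ) * D x (s+1) * D y (m-s)
              + (m.choose (s+1) : ℝ) * D x (s+1) * D y (m-s) := by
          intro s _
          have h1 : m + 1 - (s+1) = m - s := by omega
          rw [h1, Nat.choose_succ_succ]
          push_cast
          ring
        rw [Finset.sum_congr rfl this, Finset.sum_add_distrib]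
        simp [add_assoc]
      have hT2 : (∑ s ∈ range (m+1), (m.choose (s+1) : ℝ) * D x (s+1) * D y (m-s))
            + D y (m+1)
          = ∑ r ∈ range (m+1), (m.choose r : ℝ) * D x r * D y (m+1-r) := by
        rw [Finset.sum_range_succ, Nat.choose_succ_self]
        rw [Finset.sum_range_succ' (fun r => (m.choose r : ℝ) * D x r * D y (m+1-r)) m]
        have : ∀ s ∈ range m, (m.choose (s+1) : ℝ) * D x (s+1) * D y (m+1-(s+1))
            = (m.choose (s+1) : ℝ) * D x (s+1) * D y (m-s) := by
          intro s _
          have : m + 1 - (s+1) = m - s := by omega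
          rw [this]
        rw [Finset.sum_congr rfl this]
        simp
      rw [hS, hT2]
      have hmerge : (∑ s ∈ range (m+1), (m.choose s : ℝ) * D x (s+1) * D y (m-s))
            + ∑ r ∈ range (m+1), (m.choose r : ℝ) * D x r * D y (m+1-r)
          = (x + y - m) * ∑ r ∈ range (m+1), (m.choose r : ℝ) * D x r * D y (m-r) := by
        rw [Finset.mul_sum, ← Finset.sum_add_distrib]
        apply Finset.sum_congr rfl
        intro r hr
        have hr' : r ≤ m := by simpa [Nat.lt_succ_iff] using hr
        have h1 : m + 1 - r = (m - r) + 1 := by omega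
        have h2 : ((m - r : ℕ) : ℝ) = (m : ℝ) - r := by
          push_cast [Nat.cast_sub hr']
          ring
        rw [h1, D_succ x r, D_succ y (m - r), h2]
        ring
      rw [hmerge, ih, D_succ]
      ring

lemma keyP (n : ℕ) (x : ℝ) :
    ∑ r ∈ range (n+1), (n.choose r : ℝ) * D x (n+1-r) * D (x+1) r
      = x * ∑ r ∈ range (n+1), (n.choose r : ℝ) * D x (n-r) * D x r := by
  have hV : ∑ r ∈ range (n+2), ((n+1).choose r : ℝ) * D (x+1) r * D x (n+1-r)
      = D (2*x+1) (n+1) := by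
    have := vandermonde (n+1) (x+1) x
    have h : x + 1 + x = 2*x + 1 := by ring
    rwa [h] at this
  have hsplit : ∑ r ∈ range (n+2), ((n+1).choose r : ℝ) * D (x+1) r * D x (n+1-r)
      = (∑ r ∈ range (n+1), (n.choose r : ℝ) * D (x+1) r * D x (n+1-r))
        + (x+1) * ∑ s ∈ range (n+1), (n.choose s : ℝ) * D x s * D x (n-s) := by
    rw [Finset.sum_range_succ']
    have h1 : ∀ s ∈ range (n+1),
        (((n+1).choose (s+1) : ℝ)) * D (x+1) (s+1) * D x (n+1-(s+1))
        = (n.choose (s+1) : ℝ) * D (x+1) (s+1) * D x (n-s)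
          + (x+1) * ((n.choose s : ℝ) * D x s * D x (n-s)) := by
      intro s _
      have h2 : n + 1 - (s+1) = n - s := by omega
      rw [h2, Nat.choose_succ_succ, D_succ_left]
      push_cast
      ring
    rw [Finset.sum_congr rfl h1, Finset.sum_add_distrib, ← Finset.mul_sum]
    have h3 : (∑ s ∈ range (n+1), (n.choose (s+1) : ℝ) * D (x+1) (s+1) * D x (n-s))
          + (((n+1).choose 0 : ℝ) * D (x+1) 0 * D x (n+1-0))
        = ∑ r ∈ range (n+1), (n.choose r : ℝ) * D (x+1) r * D x (n+1-r) := by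
      rw [Finset.sum_range_succ, Nat.choose_succ_self]
      rw [Finset.sum_range_succ' (fun r => (n.choose r : ℝ) * D (x+1) r * D x (n+1-r)) n]
      have : ∀ s ∈ range n, (n.choose (s+1) : ℝ) * D (x+1) (s+1) * D x (n+1-(s+1))
          = (n.choose (s+1) : ℝ) * D (x+1) (s+1) * D x (n-s) := by
        intro s _
        have : n + 1 - (s+1) = n - s := by omega
        rw [this]
      rw [Finset.sum_congr rfl this]
      simp
    linarith [h3]
  have hVn : ∑ s ∈ range (n+1), (n.choose s : ℝ) * D x s * D x (n-s) = D (2*x) n := by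
    have := vandermonde n x x
    have h : x + x = 2*x := by ring
    rwa [h] at this
  have htop : D (2*x+1) (n+1) = (2*x+1) * D (2*x) n := by
    have := D_succ_left (2*x) n
    simpa using this
  have hmain : ∑ r ∈ range (n+1), (n.choose r : ℝ) * D (x+1) r * D x (n+1-r)
      = x * D (2*x) n := by
    have := hV
    rw [hsplit, hVn] at this
    rw [htop] at this
    linarith
  calc ∑ r ∈ range (n+1), (n.choose r : ℝ) * D x (n+1-r) * D (x+1) r
      = ∑ r ∈ range (n+1), (n.choose r : ℝ) * D (x+1) r * D x (n+1-r) := by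
        apply Finset.sum_congr rfl; intro r _; ring
    _ = x * D (2*x) n := hmain
    _ = x * ∑ r ∈ range (n+1), (n.choose r : ℝ) * D x (n-r) * D x r := by
        rw [← hVn]; congr 1; apply Finset.sum_congr rfl; intro r _; ring

/-! ### Bessel coefficients -/

lemma Gamma_ratio (y : ℝ) (hy : 0 < y) (k : ℕ) :
    Real.Gamma (y + k) = D (y + k - 1) k * Real.Gamma y := by
  induction k with
  | zero => simp [D]
  | succ k ih =>
      have h1 : y + ((k:ℕ)+1:ℕ) = (y + k) + 1 := by push_cast; ring
      have h2 : y + (k:ℝ) ≠ 0 := by positivity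
      rw [h1, Real.Gamma_add_one h2, ih]
      rw [show y + (k:ℝ) + 1 - 1 = (y + ↑k - 1) + 1 by ring, D_succ_left]
      ring_nf

noncomputable def a (ν : ℝ) (r : ℕ) : ℝ :=
  (-1)^r / (r.factorial * Real.Gamma (ν + r + 1))

lemma Gamma_coef_pos {ν : ℝ} (hν : -1 < ν) (r : ℕ) : 0 < Real.Gamma (ν + r + 1) := by
  apply Real.Gamma_pos_of_pos
  have : (0:ℝ) ≤ r := Nat.cast_nonneg r
  linarith

lemma a_mul_a {ν : ℝ} (hν : -1 < ν) {n r : ℕ} (hr : r ≤ n) :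
    a ν r * a ν (n-r)
      = ((-1:ℝ)^n / (n.factorial * Real.Gamma (ν + n + 1)^2)) *
          ((n.choose r : ℝ) * D (ν + n) (n-r) * D (ν + n) r) := by
  have hG1 : Real.Gamma (ν + n + 1) = D (ν + n) (n-r) * Real.Gamma (ν + r + 1) := by
    have h := Gamma_ratio (ν + r + 1) (by have : (0:ℝ) ≤ r := Nat.cast_nonneg r; linarith) (n-r)
    have e1 : ν + (r:ℝ) + 1 + ((n-r : ℕ):ℝ) = ν + n + 1 := by
      rw [Nat.cast_sub hr]; ring
    have e2 : ν + (r:ℝ) + 1 + ((n-r : ℕ):ℝ) - 1 = ν + n := by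
      rw [Nat.cast_sub hr]; ring
    rw [e2, e1] at h
    exact h
  have hG2 : Real.Gamma (ν + n + 1) = D (ν + n) r * Real.Gamma (ν + (n-r:ℕ) + 1) := by
    have h := Gamma_ratio (ν + ((n-r:ℕ):ℝ) + 1)
      (by have : (0:ℝ) ≤ ((n-r:ℕ):ℝ) := Nat.cast_nonneg _; linarith) r
    have e1 : ν + ((n-r : ℕ):ℝ) + 1 + (r:ℝ) = ν + n + 1 := by
      rw [Nat.cast_sub hr]; ring
    have e2 : ν + ((n-r : ℕ):ℝ) + 1 + (r:ℝ) - 1 = ν + n := by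
      rw [Nat.cast_sub hr]; ring
    rw [e2, e1] at h
    exact h
  have hfac : ((n.choose r : ℕ):ℝ) * (r.factorial) * ((n-r).factorial) = n.factorial := by
    exact_mod_cast congrArg (Nat.cast (R := ℝ)) (Nat.choose_mul_factorial_mul_factorial hr)
  have hsgn : ((-1:ℝ))^r * (-1)^(n-r) = (-1)^n := by
    rw [← pow_add]
    congr 1
    omega
  have hΓr : Real.Gamma (ν + r + 1) ≠ 0 := (Gamma_coef_pos hν r).ne'
  have hΓs : Real.Gamma (ν + (n-r:ℕ) + 1) ≠ 0 := (Gamma_coef_pos hν (n-r)).ne'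
  have hΓn : Real.Gamma (ν + n + 1) ≠ 0 := (Gamma_coef_pos hν n).ne'
  have hfr : (r.factorial : ℝ) ≠ 0 := Nat.cast_ne_zero.2 r.factorial_ne_zero
  have hfs : ((n-r).factorial : ℝ) ≠ 0 := Nat.cast_ne_zero.2 (n-r).factorial_ne_zero
  have hfn : (n.factorial : ℝ) ≠ 0 := Nat.cast_ne_zero.2 n.factorial_ne_zero
  have hD1 : D (ν + n) (n-r) = Real.Gamma (ν + n + 1) / Real.Gamma (ν + r + 1) := by
    rw [eq_div_iff hΓr]; exact hG1.symm
  have hD2 : D (ν + n) r = Real.Gamma (ν + n + 1) / Real.Gamma (ν + (n-r:ℕ) + 1) := by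
    rw [eq_div_iff hΓs]; exact hG2.symm
  have gen : ∀ (s1 fr fs fn cc gr gs gn : ℝ), fr ≠ 0 → fs ≠ 0 → gr ≠ 0 → gs ≠ 0 → gn ≠ 0 →
      cc * fr * fs = fn → fn ≠ 0 →
      s1 / (fr * gr * (fs * gs)) = s1 / (fn * gn^2) * (cc * (gn/gr) * (gn/gs)) := by
    intro s1 fr fs fn cc gr gs gn h1 h2 h3 h4 h5 h6 h7
    have hcc : cc ≠ 0 := by
      rintro rfl
      rw [← h6] at h7
      simp at h7
    rw [← h6]
    field_simp
  unfold a
  rw [div_mul_div_comm, hsgn, hD1, hD2]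
  exact gen _ _ _ _ _ _ _ _ hfr hfs hΓr hΓs hΓn hfac hfn

lemma keyB {ν : ℝ} (hν : -1 < ν) {n r : ℕ} (hr : r ≤ n) :
    (ν + ↑n + 1) * ((ν + ↑r) * a ν r * a (ν+1) (n-r))
      = ((-1:ℝ)^n / (n.factorial * Real.Gamma (ν + n + 1)^2)) *
          ((n.choose r : ℝ) * D (ν + n) (n+1-r) * D (ν + n + 1) r) := by
  have hν' : -1 < ν + 1 := by linarith
  have hΓr : Real.Gamma (ν + r + 1) ≠ 0 := (Gamma_coef_pos hν r).ne'
  have hΓs : Real.Gamma (ν + 1 + ↑(n-r) + 1) ≠ 0 := (Gamma_coef_pos hν' (n-r)).ne'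
  have hΓn : Real.Gamma (ν + n + 1) ≠ 0 := (Gamma_coef_pos hν n).ne'
  have hfr : (r.factorial : ℝ) ≠ 0 := Nat.cast_ne_zero.2 r.factorial_ne_zero
  have hfs : ((n-r).factorial : ℝ) ≠ 0 := Nat.cast_ne_zero.2 (n-r).factorial_ne_zero
  have hfn : (n.factorial : ℝ) ≠ 0 := Nat.cast_ne_zero.2 n.factorial_ne_zero
  have hfac : ((n.choose r : ℕ):ℝ) * (r.factorial) * ((n-r).factorial) = n.factorial := by
    exact_mod_cast congrArg (Nat.cast (R := ℝ)) (Nat.choose_mul_factorial_mul_factorial hr)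
  have hsgn : ((-1:ℝ))^r * (-1)^(n-r) = (-1)^n := by
    rw [← pow_add]; congr 1; omega
  have hG1 : Real.Gamma (ν + n + 1) = D (ν + n) (n-r) * Real.Gamma (ν + r + 1) := by
    have h := Gamma_ratio (ν + r + 1) (by have : (0:ℝ) ≤ r := Nat.cast_nonneg r; linarith) (n-r)
    have e2 : ν + (r:ℝ) + 1 + ((n-r : ℕ):ℝ) - 1 = ν + n := by rw [Nat.cast_sub hr]; ring
    have e1 : ν + (r:ℝ) + 1 + ((n-r : ℕ):ℝ) = ν + n + 1 := by rw [Nat.cast_sub hr]; ring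
    rw [e2, e1] at h
    exact h
  have hD1' : D (ν + n) (n+1-r) = D (ν + n) (n-r) * (ν + r) := by
    have e : n + 1 - r = (n-r) + 1 := by omega
    rw [e, D_succ]
    congr 1
    rw [Nat.cast_sub hr]; ring
  have hG2 : Real.Gamma (ν + n + 1 + 1) = D (ν + n + 1) r * Real.Gamma (ν + 1 + ↑(n-r) + 1) := by
    have h := Gamma_ratio (ν + 1 + ((n-r:ℕ):ℝ) + 1)
      (by have : (0:ℝ) ≤ ((n-r:ℕ):ℝ) := Nat.cast_nonneg _; linarith) r
    have e2 : ν + 1 + ((n-r : ℕ):ℝ) + 1 + (r:ℝ) - 1 = ν + n + 1 := by rw [Nat.cast_sub hr]; ring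
    have e1 : ν + 1 + ((n-r : ℕ):ℝ) + 1 + (r:ℝ) = ν + n + 1 + 1 := by rw [Nat.cast_sub hr]; ring
    rw [e2, e1] at h
    exact h
  have hpos : (0:ℝ) < ν + n + 1 := by
    have : (0:ℝ) ≤ n := Nat.cast_nonneg n
    linarith
  have hGtop : Real.Gamma (ν + n + 1 + 1) = (ν + n + 1) * Real.Gamma (ν + n + 1) :=
    Real.Gamma_add_one hpos.ne'
  have hD1 : D (ν + n) (n-r) = Real.Gamma (ν + n + 1) / Real.Gamma (ν + r + 1) := by
    rw [eq_div_iff hΓr]; exact hG1.symm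
  have hD2 : D (ν + n + 1) r
      = (ν + n + 1) * Real.Gamma (ν + n + 1) / Real.Gamma (ν + 1 + ↑(n-r) + 1) := by
    rw [eq_div_iff hΓs, ← hG2, hGtop]
  have gen2 : ∀ (w u sr ss fr fs fn cc gr gs gn : ℝ), fr ≠ 0 → fs ≠ 0 → gr ≠ 0 → gs ≠ 0 →
      gn ≠ 0 → cc * fr * fs = fn → fn ≠ 0 →
      w * (u * (sr/(fr*gr)) * (ss/(fs*gs)))
        = (sr*ss/(fn*gn^2)) * (cc * (gn/gr*u) * (w*gn/gs)) := by
    intro w u sr ss fr fs fn cc gr gs gn h1 h2 h3 h4 h5 h6 h7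
    have hcc : cc ≠ 0 := by
      rintro rfl
      rw [← h6] at h7
      simp at h7
    rw [← h6]
    field_simp
  unfold a
  rw [hD1', hD1, hD2, ← hsgn]
  exact gen2 _ _ _ _ _ _ _ _ _ _ _ hfr hfs hΓr hΓs hΓn hfac hfn

/-- The key coefficient identity (Lommel). -/
lemma keyA {ν : ℝ} (hν : -1 < ν) (n : ℕ) :
    (ν + ↑n + 1) * ∑ r ∈ range (n+1), (ν + ↑r) * a ν r * a (ν+1) (n-r)
      = (ν + ↑n) * ∑ r ∈ range (n+1), a ν r * a ν (n-r) := by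
  have hL : (ν + ↑n + 1) * ∑ r ∈ range (n+1), (ν + ↑r) * a ν r * a (ν+1) (n-r)
      = ((-1:ℝ)^n / (n.factorial * Real.Gamma (ν + n + 1)^2)) *
          ∑ r ∈ range (n+1), (n.choose r : ℝ) * D (ν + ↑n) (n+1-r) * D (ν + ↑n + 1) r := by
    rw [Finset.mul_sum, Finset.mul_sum]
    apply Finset.sum_congr rfl
    intro r hr
    exact keyB hν (Nat.lt_succ_iff.mp (Finset.mem_range.mp hr))
  have hR : ∑ r ∈ range (n+1), a ν r * a ν (n-r)
      = ((-1:ℝ)^n / (n.factorial * Real.Gamma (ν + n + 1)^2)) *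
          ∑ r ∈ range (n+1), (n.choose r : ℝ) * D (ν + ↑n) (n-r) * D (ν + ↑n) r := by
    rw [Finset.mul_sum]
    apply Finset.sum_congr rfl
    intro r hr
    exact a_mul_a hν (Nat.lt_succ_iff.mp (Finset.mem_range.mp hr))
  rw [hL, hR, keyP n (ν + ↑n)]
  ring

lemma a_succ {ν : ℝ} (hν : -1 < ν) (s : ℕ) :
    ((s:ℝ)+1) * a ν (s+1) = - a (ν+1) s := by
  have hΓ : Real.Gamma (ν + ↑(s+1) + 1) ≠ 0 := (Gamma_coef_pos hν (s+1)).ne'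
  have hΓ' : Real.Gamma (ν + ((s:ℝ)+1) + 1) ≠ 0 := by
    rwa [show ν + ((s:ℝ)+1) + 1 = ν + ↑(s+1) + 1 by push_cast; ring]
  have hfs : (s.factorial : ℝ) ≠ 0 := Nat.cast_ne_zero.2 s.factorial_ne_zero
  unfold a
  rw [show ν + 1 + (s:ℝ) + 1 = ν + ↑(s+1) + 1 by push_cast; ring]
  rw [show ((s+1).factorial : ℝ) = ((s:ℝ)+1) * s.factorial by
    rw [Nat.factorial_succ]; push_cast; ring]
  rw [pow_succ]
  have hs1 : ((s:ℝ)+1) ≠ 0 := by positivity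
  field_simp

/-! ### Summability -/

lemma Gamma_coef_ge {ν : ℝ} (hν : -1 < ν) (s : ℕ) :
    Real.Gamma (ν+2) ≤ Real.Gamma (ν + ↑(s+1) + 1) := by
  induction s with
  | zero =>
      rw [show ν + ((0:ℕ)+1:ℕ) + 1 = ν + 2 by push_cast; ring]
  | succ s ih =>
      have hs : (0:ℝ) ≤ (s:ℝ) := Nat.cast_nonneg s
      have hpos : (0:ℝ) < ν + ↑(s+1) + 1 := by push_cast; linarith
      have harg : (1:ℝ) ≤ ν + ↑(s+1) + 1 := by push_cast; linarith
      have he : ν + (↑(s+1+1) : ℝ) + 1 = (ν + ↑(s+1) + 1) + 1 := by push_cast; ring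
      rw [he, Real.Gamma_add_one hpos.ne']
      have hΓpos : 0 < Real.Gamma (ν + ↑(s+1) + 1) := Gamma_coef_pos hν (s+1)
      nlinarith

lemma norm_a_le {ν : ℝ} (hν : -1 < ν) (r : ℕ) :
    ‖a ν r‖ ≤ (1/Real.Gamma (ν+1) + 1/Real.Gamma (ν+2)) / r.factorial := by
  have h1 : 0 < Real.Gamma (ν+1) := Real.Gamma_pos_of_pos (by linarith)
  have h2 : 0 < Real.Gamma (ν+2) := Real.Gamma_pos_of_pos (by linarith)
  have hΓ : 0 < Real.Gamma (ν + r + 1) := Gamma_coef_pos hν r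
  have hfr : (0:ℝ) < r.factorial := by exact_mod_cast r.factorial_pos
  have hnorm : ‖a ν r‖ = 1 / (r.factorial * Real.Gamma (ν + r + 1)) := by
    unfold a
    rw [norm_div, norm_pow, norm_neg, norm_one, one_pow, Real.norm_eq_abs,
      abs_of_pos (by positivity)]
  rw [hnorm]
  cases r with
  | zero =>
      simp only [Nat.factorial_zero, Nat.cast_one, Nat.cast_zero]
      rw [show ν + (0:ℝ) + 1 = ν + 1 by ring]
      rw [one_mul, div_one]
      have : 1 / Real.Gamma (ν+1) ≤ 1/Real.Gamma (ν+1) + 1/Real.Gamma (ν+2) := by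
        have : 0 < 1/Real.Gamma (ν+2) := by positivity
        linarith
      exact this
  | succ s =>
      have hge := Gamma_coef_ge hν s
      calc 1/(((s+1).factorial : ℝ) * Real.Gamma (ν + ↑(s+1) + 1))
          ≤ 1/(((s+1).factorial : ℝ) * Real.Gamma (ν+2)) := by
            gcongr
        _ = (1/Real.Gamma (ν+2)) / ((s+1).factorial : ℝ) := by
            rw [mul_comm, ← div_div]
        _ ≤ (1/Real.Gamma (ν+1) + 1/Real.Gamma (ν+2)) / ((s+1).factorial : ℝ) := by
            gcongr
            have : 0 < 1/Real.Gamma (ν+1) := by positivity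
            linarith

lemma summable_norm_pow {ν : ℝ} (hν : -1 < ν) (t : ℝ) :
    Summable (fun r => ‖a ν r * t ^ r‖) := by
  apply Summable.of_nonneg_of_le (fun r => norm_nonneg _) (fun r => ?_)
    ((Real.summable_pow_div_factorial |t|).mul_left
      (1/Real.Gamma (ν+1) + 1/Real.Gamma (ν+2)))
  rw [norm_mul, norm_pow, Real.norm_eq_abs t]
  calc ‖a ν r‖ * |t|^r
      ≤ ((1/Real.Gamma (ν+1) + 1/Real.Gamma (ν+2)) / r.factorial) * |t|^r := by
        apply mul_le_mul_of_nonneg_right (norm_a_le hν r) (by positivity)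
    _ = (1/Real.Gamma (ν+1) + 1/Real.Gamma (ν+2)) * (|t|^r / r.factorial) := by ring

noncomputable def gfun (ν t : ℝ) : ℝ := ∑' r, a ν r * t ^ r

lemma besselJ_eq (ν x : ℝ) (hx : 0 < x) :
    besselJ ν x = (x/2) ^ ν * gfun ν ((x/2)^2) := by
  have hx2 : 0 < x/2 := by linarith
  unfold besselJ gfun
  rw [← tsum_mul_left]
  apply tsum_congr
  intro r
  have h1 : (x/2) ^ (ν + 2*(r:ℝ)) = (x/2)^ν * ((x/2)^2)^r := by
    rw [Real.rpow_add hx2]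
    congr 1
    rw [show (2:ℝ)*(r:ℝ) = ((2*r : ℕ):ℝ) by push_cast; ring, Real.rpow_natCast, pow_mul]
  rw [h1]
  unfold a
  ring

/-! ### tsum manipulations -/

lemma summable_norm_q {ν : ℝ} (hν : -1 < ν) (t : ℝ) :
    Summable (fun r : ℕ => ‖(r:ℝ) * a ν r * t ^ r‖) := by
  have hν1 : -1 < ν + 1 := by linarith
  rw [← summable_nat_add_iff 1]
  have he : (fun s => ‖((s+1:ℕ):ℝ) * a ν (s+1) * t ^ (s+1)‖)
      = fun s => |t| * ‖a (ν+1) s * t ^ s‖ := by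
    funext s
    have h := a_succ hν s
    have : ((s+1:ℕ):ℝ) * a ν (s+1) * t ^ (s+1) = -t * (a (ν+1) s * t ^ s) := by
      push_cast
      calc ((s:ℝ)+1) * a ν (s+1) * t^(s+1) = (((s:ℝ)+1) * a ν (s+1)) * t^(s+1) := by ring
        _ = (- a (ν+1) s) * t^(s+1) := by rw [h]
        _ = -t * (a (ν+1) s * t^s) := by rw [pow_succ]; ring
    rw [this, norm_mul, norm_neg, Real.norm_eq_abs]
  rw [he]
  exact (summable_norm_pow hν1 t).mul_left |t|

lemma tsum_q {ν : ℝ} (hν : -1 < ν) (t : ℝ) :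
    ∑' r : ℕ, (r:ℝ) * a ν r * t ^ r = -t * gfun (ν+1) t := by
  have hs := (summable_norm_q hν t).of_norm
  rw [Summable.tsum_eq_zero_add hs]
  have h0 : ((0:ℕ):ℝ) * a ν 0 * t ^ 0 = 0 := by simp
  rw [h0, zero_add]
  have he : ∀ s : ℕ, ((s+1:ℕ):ℝ) * a ν (s+1) * t ^ (s+1) = -t * (a (ν+1) s * t ^ s) := by
    intro s
    have h := a_succ hν s
    push_cast
    calc ((s:ℝ)+1) * a ν (s+1) * t^(s+1) = (((s:ℝ)+1) * a ν (s+1)) * t^(s+1) := by ring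
      _ = (- a (ν+1) s) * t^(s+1) := by rw [h]
      _ = -t * (a (ν+1) s * t^s) := by rw [pow_succ]; ring
  rw [tsum_congr he, tsum_mul_left]
  rfl

lemma summable_norm_p {ν : ℝ} (hν : -1 < ν) (t : ℝ) :
    Summable (fun r : ℕ => ‖(ν + (r:ℝ)) * a ν r * t ^ r‖) := by
  apply Summable.of_nonneg_of_le (fun r => norm_nonneg _) (fun r => ?_)
    (((summable_norm_pow hν t).mul_left |ν|).add (summable_norm_q hν t))
  have hpr : (ν + (r:ℝ)) * a ν r * t ^ r
      = ν * (a ν r * t ^ r) + (r:ℝ) * a ν r * t ^ r := by ring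
  rw [hpr]
  calc ‖ν * (a ν r * t ^ r) + (r:ℝ) * a ν r * t ^ r‖
      ≤ ‖ν * (a ν r * t ^ r)‖ + ‖(r:ℝ) * a ν r * t ^ r‖ := norm_add_le _ _
    _ = |ν| * ‖a ν r * t ^ r‖ + ‖(r:ℝ) * a ν r * t ^ r‖ := by
        rw [norm_mul, Real.norm_eq_abs]

lemma tsum_p {ν : ℝ} (hν : -1 < ν) (t : ℝ) :
    ∑' r : ℕ, (ν + (r:ℝ)) * a ν r * t ^ r = ν * gfun ν t - t * gfun (ν+1) t := by
  have he : ∀ r : ℕ, (ν + (r:ℝ)) * a ν r * t ^ r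
      = ν * (a ν r * t ^ r) + (r:ℝ) * a ν r * t ^ r := fun r => by ring
  rw [tsum_congr he, Summable.tsum_add (((summable_norm_pow hν t).of_norm).mul_left ν)
    (summable_norm_q hν t).of_norm, tsum_mul_left, tsum_q hν t]
  unfold gfun
  ring

/-! ### Cauchy products -/

noncomputable def A0 (ν : ℝ) (n : ℕ) : ℝ := ∑ r ∈ range (n+1), a ν r * a ν (n-r)
noncomputable def C0 (ν : ℝ) (n : ℕ) : ℝ :=
  ∑ r ∈ range (n+1), (ν + (r:ℝ)) * a ν r * a (ν+1) (n-r)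

lemma cauchyA (ν t : ℝ) (n : ℕ) :
    ∑ k ∈ range (n+1), (a ν k * t^k) * (a ν (n-k) * t^(n-k)) = A0 ν n * t^n := by
  unfold A0
  rw [Finset.sum_mul]
  apply Finset.sum_congr rfl
  intro k hk
  have hk' : k ≤ n := Nat.lt_succ_iff.mp (Finset.mem_range.mp hk)
  have ht : t^k * t^(n-k) = t^n := by
    rw [← pow_add]
    congr 1
    omega
  calc (a ν k * t^k) * (a ν (n-k) * t^(n-k)) = a ν k * a ν (n-k) * (t^k * t^(n-k)) := by ring
    _ = a ν k * a ν (n-k) * t^n := by rw [ht]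

lemma cauchyC (ν t : ℝ) (n : ℕ) :
    ∑ k ∈ range (n+1), ((ν + (k:ℝ)) * a ν k * t^k) * (a (ν+1) (n-k) * t^(n-k))
      = C0 ν n * t^n := by
  unfold C0
  rw [Finset.sum_mul]
  apply Finset.sum_congr rfl
  intro k hk
  have hk' : k ≤ n := Nat.lt_succ_iff.mp (Finset.mem_range.mp hk)
  have ht : t^k * t^(n-k) = t^n := by
    rw [← pow_add]
    congr 1
    omega
  calc ((ν + (k:ℝ)) * a ν k * t^k) * (a (ν+1) (n-k) * t^(n-k))
      = (ν + (k:ℝ)) * a ν k * a (ν+1) (n-k) * (t^k * t^(n-k)) := by ring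
    _ = (ν + (k:ℝ)) * a ν k * a (ν+1) (n-k) * t^n := by rw [ht]

lemma summable_norm_A0 {ν : ℝ} (hν : -1 < ν) (t : ℝ) :
    Summable (fun n => ‖A0 ν n * t^n‖) := by
  have h := summable_norm_sum_mul_range_of_summable_norm
    (summable_norm_pow hν t) (summable_norm_pow hν t)
  apply h.congr
  intro n
  rw [cauchyA ν t n]

lemma tsumA {ν : ℝ} (hν : -1 < ν) (t : ℝ) :
    ∑' n : ℕ, A0 ν n * t^n = gfun ν t * gfun ν t := by
  unfold gfun
  rw [tsum_mul_tsum_eq_tsum_sum_range_of_summable_norm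
    (summable_norm_pow hν t) (summable_norm_pow hν t)]
  exact tsum_congr (fun n => (cauchyA ν t n).symm)

lemma summable_norm_C0 {ν : ℝ} (hν : -1 < ν) (t : ℝ) :
    Summable (fun n => ‖C0 ν n * t^n‖) := by
  have hν1 : -1 < ν + 1 := by linarith
  have h := summable_norm_sum_mul_range_of_summable_norm
    (summable_norm_p hν t) (summable_norm_pow hν1 t)
  apply h.congr
  intro n
  rw [cauchyC ν t n]

lemma tsumC {ν : ℝ} (hν : -1 < ν) (t : ℝ) :
    ∑' n : ℕ, C0 ν n * t^n = (ν * gfun ν t - t * gfun (ν+1) t) * gfun (ν+1) t := by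
  have hν1 : -1 < ν + 1 := by linarith
  have h := tsum_mul_tsum_eq_tsum_sum_range_of_summable_norm
    (summable_norm_p hν t) (summable_norm_pow hν1 t)
  rw [tsum_p hν t] at h
  rw [show (∑' n : ℕ, a (ν+1) n * t ^ n) = gfun (ν+1) t from rfl] at h
  rw [h]
  exact tsum_congr (fun n => (cauchyC ν t n).symm)

lemma hkey {ν : ℝ} (hν : -1 < ν) (t : ℝ) (n : ℕ) :
    A0 ν n * t^n / (2*ν+2*(n:ℝ)+2) = 1/2 * (A0 ν n * t^n - C0 ν n * t^n) := by
  have hk : (ν + ↑n + 1) * C0 ν n = (ν + ↑n) * A0 ν n := keyA hν n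
  have hn : (0:ℝ) ≤ n := Nat.cast_nonneg n
  have hpos : (0:ℝ) < ν + ↑n + 1 := by linarith
  have e1 : (ν+↑n+1) * (A0 ν n - C0 ν n) = A0 ν n := by linear_combination -hk
  rw [div_eq_iff (by linarith : (2*ν+2*(n:ℝ)+2) ≠ 0)]
  linear_combination (-(t^n : ℝ)) * e1

/-! ### the integrand as a series -/

lemma integrand_eq {ν : ℝ} (hν : -1 < ν) {μ x : ℝ} (hμ : 0 < μ) (hx : 0 < x) :
    (besselJ ν (μ * x))^2 * x
      = ∑' n : ℕ, (A0 ν n * ((μ/2)^2)^n * (μ/2)^(2*ν)) * x^(2*ν+2*(n:ℝ)+1) := by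
  have hc : (0:ℝ) < μ/2 := by linarith
  have hmx : 0 < μ * x := by positivity
  have h1 : besselJ ν (μ*x) = ((μ/2)*x) ^ ν * gfun ν (((μ/2)*x)^2) := by
    rw [besselJ_eq ν (μ*x) hmx, show μ*x/2 = μ/2*x by ring]
  have h2 : ((μ/2)*x) ^ ν = (μ/2)^ν * x^ν := Real.mul_rpow hc.le hx.le
  have hCau : gfun ν (((μ/2)*x)^2) * gfun ν (((μ/2)*x)^2)
      = ∑' n : ℕ, A0 ν n * (((μ/2)*x)^2)^n := by
    unfold gfun
    rw [tsum_mul_tsum_eq_tsum_sum_range_of_summable_norm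
      (summable_norm_pow hν _) (summable_norm_pow hν _)]
    exact tsum_congr (fun n => cauchyA ν _ n)
  have hLHS : (besselJ ν (μ*x))^2 * x
      = (((μ/2)^ν)^2 * (x^ν)^2 * x) * (gfun ν (((μ/2)*x)^2) * gfun ν (((μ/2)*x)^2)) := by
    rw [h1, h2]
    ring
  rw [hLHS, hCau, ← tsum_mul_left]
  apply tsum_congr
  intro n
  have hcp : ((μ/2)^ν)^2 = (μ/2)^(2*ν) := by
    rw [← Real.rpow_natCast ((μ/2)^ν) 2, ← Real.rpow_mul hc.le]
    norm_num
    rw [mul_comm]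
  have hxp : (x^ν)^2 * x * (x^2)^n = x^(2*ν+2*(n:ℝ)+1) := by
    have e1 : (x^ν)^2 = x^(2*ν) := by
      rw [← Real.rpow_natCast (x^ν) 2, ← Real.rpow_mul hx.le]
      norm_num
      rw [mul_comm]
    have e2 : (x^2)^n = x^((2*n : ℕ):ℝ) := by
      rw [Real.rpow_natCast, pow_mul]
    rw [e1, e2]
    have hxx : x ^ (2*ν) * x * x ^ ((2*n:ℕ):ℝ)
        = (x ^ (2*ν) * x ^ ((2*n:ℕ):ℝ)) * x ^ (1:ℝ) := by
      rw [Real.rpow_one]; ring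
    rw [hxx, ← Real.rpow_add hx, ← Real.rpow_add hx]
    congr 1
    push_cast
    ring
  calc ((μ/2)^ν)^2 * (x^ν)^2 * x * (A0 ν n * ((μ/2*x)^2)^n)
      = (A0 ν n * ((μ/2)^2)^n) * (((μ/2)^ν)^2) * ((x^ν)^2 * x * (x^2)^n) := by
        rw [mul_pow (μ/2) x 2, mul_pow]
        ring
    _ = (A0 ν n * ((μ/2)^2)^n * (μ/2)^(2*ν)) * x^(2*ν+2*(n:ℝ)+1) := by
        rw [hcp, hxp]

/-! ### integration of power functions on (0,1] -/

lemma Fn_integrable {e : ℝ} (he : -1 < e) (k : ℝ) :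
    MeasureTheory.IntegrableOn (fun x => k * x^e) (Set.Ioc (0:ℝ) 1) := by
  have h := (intervalIntegral.intervalIntegrable_rpow' (a := 0) (b := 1) he).const_mul k
  rwa [intervalIntegrable_iff_integrableOn_Ioc_of_le zero_le_one] at h

open intervalIntegral in
lemma Fn_integral {e : ℝ} (he : -1 < e) (k : ℝ) :
    ∫ x in Set.Ioc (0:ℝ) 1, k * x^e = k / (e+1) := by
  rw [← intervalIntegral.integral_of_le zero_le_one]
  rw [integral_const_mul, integral_rpow (Or.inl he)]
  rw [Real.one_rpow, Real.zero_rpow (by linarith : e+1 ≠ 0)]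
  ring

lemma Fn_norm_integral {e : ℝ} (he : -1 < e) (k : ℝ) :
    ∫ x in Set.Ioc (0:ℝ) 1, ‖k * x^e‖ = ‖k‖ / (e+1) := by
  have heq : Set.EqOn (fun x => ‖k * x^e‖) (fun x => ‖k‖ * x^e) (Set.Ioc (0:ℝ) 1) := by
    intro x hx
    simp only
    rw [norm_mul, Real.norm_eq_abs (x^e), abs_of_pos (Real.rpow_pos_of_pos hx.1 e)]
  rw [MeasureTheory.setIntegral_congr_fun measurableSet_Ioc heq, Fn_integral he]

end BesselNorm

open BesselNorm MeasureTheory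

theorem bessel_normalization (ν : ℝ) (hν : -1 < ν) (μ : ℝ)
    (hμ : 0 < μ) (hzero : besselJ ν μ = 0) :
    ∫ x in (0:ℝ)..1, (besselJ ν (μ * x)) ^ 2 * x
      = (1 / 2) * (besselJ (ν + 1) μ) ^ 2 := by
  have hc : (0:ℝ) < μ/2 := by linarith
  have hν1 : -1 < ν + 1 := by linarith
  have hg0 : gfun ν ((μ/2)^2) = 0 := by
    have hJ := besselJ_eq ν μ hμ
    rw [hzero] at hJ
    have hne : (μ/2) ^ ν ≠ 0 := (Real.rpow_pos_of_pos hc ν).ne'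
    rcases mul_eq_zero.mp hJ.symm with h | h
    · exact absurd h hne
    · exact h
  have he : ∀ n : ℕ, (-1:ℝ) < 2*ν+2*(n:ℝ)+1 := by
    intro n
    have : (0:ℝ) ≤ n := Nat.cast_nonneg n
    linarith
  have hIoc : (∫ x in (0:ℝ)..1, (besselJ ν (μ * x)) ^ 2 * x)
      = ∫ x in Set.Ioc (0:ℝ) 1, (besselJ ν (μ * x)) ^ 2 * x :=
    intervalIntegral.integral_of_le zero_le_one
  have hptw : Set.EqOn (fun x => (besselJ ν (μ * x)) ^ 2 * x)
      (fun x => ∑' n : ℕ, (A0 ν n * ((μ/2)^2)^n * (μ/2)^(2*ν)) * x^(2*ν+2*(n:ℝ)+1))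
      (Set.Ioc (0:ℝ) 1) := by
    intro x hx
    exact integrand_eq hν hμ hx.1
  have hKnorm : Summable (fun n : ℕ => ‖A0 ν n * ((μ/2)^2)^n * (μ/2)^(2*ν)‖) := by
    have h := (summable_norm_A0 hν ((μ/2)^2)).mul_right ‖(μ/2)^(2*ν)‖
    apply h.congr
    intro n
    simp [norm_mul]
  have hnormint : Summable (fun n : ℕ => ∫ x in Set.Ioc (0:ℝ) 1,
      ‖(A0 ν n * ((μ/2)^2)^n * (μ/2)^(2*ν)) * x^(2*ν+2*(n:ℝ)+1)‖) := by
    apply Summable.of_nonneg_of_le (fun n => ?_) (fun n => ?_)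
      (hKnorm.mul_right (1/(2*ν+2)))
    · rw [Fn_norm_integral (he n)]
      apply div_nonneg (norm_nonneg _)
      have : (0:ℝ) ≤ n := Nat.cast_nonneg n
      linarith
    · rw [Fn_norm_integral (he n)]
      have h1 : (0:ℝ) < 2*ν+2 := by linarith
      have hn : (0:ℝ) ≤ n := Nat.cast_nonneg n
      calc ‖A0 ν n * ((μ/2)^2)^n * (μ/2)^(2*ν)‖ / (2*ν+2*(n:ℝ)+1+1)
          ≤ ‖A0 ν n * ((μ/2)^2)^n * (μ/2)^(2*ν)‖ / (2*ν+2) := by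
            apply div_le_div_of_nonneg_left (norm_nonneg _) h1 (by linarith)
        _ = ‖A0 ν n * ((μ/2)^2)^n * (μ/2)^(2*ν)‖ * (1/(2*ν+2)) := by
            rw [div_eq_mul_one_div]
  have hIsum : ∫ x in Set.Ioc (0:ℝ) 1,
        (∑' n : ℕ, (A0 ν n * ((μ/2)^2)^n * (μ/2)^(2*ν)) * x^(2*ν+2*(n:ℝ)+1))
      = ∑' n : ℕ, (A0 ν n * ((μ/2)^2)^n * (μ/2)^(2*ν)) / (2*ν+2*(n:ℝ)+1+1) := by
    rw [← MeasureTheory.integral_tsum_of_summable_integral_norm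
      (fun n => Fn_integrable (he n) _) hnormint]
    exact tsum_congr (fun n => Fn_integral (he n) _)
  have hseries : ∑' n : ℕ, (A0 ν n * ((μ/2)^2)^n * (μ/2)^(2*ν)) / (2*ν+2*(n:ℝ)+1+1)
      = ((μ/2)^(2*ν) * (1/2)) * ∑' n : ℕ,
          (A0 ν n * ((μ/2)^2)^n - C0 ν n * ((μ/2)^2)^n) := by
    rw [← tsum_mul_left]
    apply tsum_congr
    intro n
    have h := hkey hν ((μ/2)^2) n
    calc (A0 ν n * ((μ/2)^2)^n * (μ/2)^(2*ν)) / (2*ν+2*(n:ℝ)+1+1)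
        = (A0 ν n * ((μ/2)^2)^n / (2*ν+2*(n:ℝ)+2)) * (μ/2)^(2*ν) := by
          rw [show 2*ν+2*(n:ℝ)+1+1 = 2*ν+2*(n:ℝ)+2 by ring]
          ring
      _ = (1/2 * (A0 ν n * ((μ/2)^2)^n - C0 ν n * ((μ/2)^2)^n)) * (μ/2)^(2*ν) := by
          rw [h]
      _ = (μ/2)^(2*ν) * (1/2) * (A0 ν n * ((μ/2)^2)^n - C0 ν n * ((μ/2)^2)^n) := by
          ring
  have htsub : ∑' n : ℕ, (A0 ν n * ((μ/2)^2)^n - C0 ν n * ((μ/2)^2)^n)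
      = (gfun ν ((μ/2)^2) * gfun ν ((μ/2)^2))
        - (ν * gfun ν ((μ/2)^2) - ((μ/2)^2) * gfun (ν+1) ((μ/2)^2)) * gfun (ν+1) ((μ/2)^2) := by
    rw [Summable.tsum_sub (summable_norm_A0 hν ((μ/2)^2)).of_norm
      (summable_norm_C0 hν ((μ/2)^2)).of_norm, tsumA hν ((μ/2)^2), tsumC hν ((μ/2)^2)]
  have hJ1 : besselJ (ν+1) μ = (μ/2)^(ν+1) * gfun (ν+1) ((μ/2)^2) := besselJ_eq (ν+1) μ hμ
  have hpow : (μ/2)^(2*ν) * ((μ/2)^2) = ((μ/2)^(ν+1))^2 := by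
    rw [sq ((μ/2)^(ν+1)), ← Real.rpow_add hc,
      show ((μ/2):ℝ)^2 = (μ/2)^((2:ℕ):ℝ) from (Real.rpow_natCast _ 2).symm,
      ← Real.rpow_add hc]
    norm_num
    congr 1
    ring
  rw [hIoc, MeasureTheory.setIntegral_congr_fun measurableSet_Ioc hptw, hIsum, hseries,
    htsub, hg0, hJ1]
  linear_combination (1/2 : ℝ) * (gfun (ν+1) ((μ/2)^2))^2 * hpow
end
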